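/- Smoothing property of the Lévy integral operator: under (H0), the operator f ↦ I^ψ_+ f, where I^ψ_+ f(x) = ∫_{−1}^x k₀⁺(x − y − 1) f(y) dy for x ∈ [−1,1], is a bounded linear operator from L¹[−1,1] to the Sobolev space W^{1,1}(−1,1), and its weak derivative is (I^ψ_+ f)'(x) = ∫_{−1}^x k₋₁⁺(x − y − 1) f(y) dy for a.e. x ∈ [−1,1]. Likewise, f ↦ I^ψ_+ f is a bounded linear operator from C[−1,1] to C¹[−1,1], and the same derivative formula holds for every x ∈ [−1,1]. -/

import Mathlib

open MeasureTheory Set Filter Topology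

set_option maxHeartbeats 1000000

noncomputable section

/-- The tail `φ((y, ∞))` of the Lévy measure `φ`. -/
def levyTail (φ : Measure ℝ) (y : ℝ) : ℝ := (φ (Ioi y)).toReal

/-- The function `Φ(x) = ∫_x^∞ φ((y,∞)) dy` for `x > 0`, and `0` for `x ≤ 0`. -/
def PhiFn (φ : Measure ℝ) (x : ℝ) : ℝ :=
  if 0 < x then ∫ y in Ioi x, levyTail φ y else 0

/-- The Laplace exponent `ψ(ξ) = ξ² ∫_0^∞ e^{-ξ x} Φ(x) dx`. -/
def psiFn (φ : Measure ℝ) (ξ : ℂ) : ℂ :=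
  ξ ^ 2 * ∫ x in Ioi (0 : ℝ), Complex.exp (-ξ * (x : ℂ)) * (PhiFn φ x : ℂ)

/-- Assumption (H0): `φ` is a nonnegative Borel measure on `(0,∞)` with
`∫ (z² ∧ z) φ(dz) < ∞` and `∫_{(0,1)} z φ(dz) = ∞`. -/
def H0 (φ : Measure ℝ) : Prop :=
  φ (Iic 0) = 0 ∧
  (∫⁻ z in Ioi (0 : ℝ), ENNReal.ofReal (min (z ^ 2) z) ∂φ) < ⊤ ∧
  (∫⁻ z in Ioo (0 : ℝ) 1, ENNReal.ofReal z ∂φ) = ⊤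

/-- The defining properties of the scale kernel `k₋₁⁺` (extension by zero to `(-∞,-1)`
of the scale function `k₋₁` of Lemma 3.1): nonnegative on `[-1,∞)`, continuous on
`(-1,∞)`, locally integrable, of sub-exponential growth, with Laplace transform
`∫_0^∞ e^{-ξ y} k₋₁(y-1) dy = ξ/ψ(ξ)` on `{Re ξ > 0}`. -/
def IsScaleKernel (φ : Measure ℝ) (k : ℝ → ℝ) : Prop :=
  (∀ x : ℝ, x < -1 → k x = 0) ∧
  (∀ x : ℝ, -1 ≤ x → 0 ≤ k x) ∧
  ContinuousOn k (Ioi (-1)) ∧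
  LocallyIntegrableOn k (Ici (-1)) ∧
  (∀ ε : ℝ, 0 < ε → Tendsto (fun x : ℝ => Real.exp (-ε * x) * k x) atTop (nhds 0)) ∧
  ∀ ξ : ℂ, 0 < ξ.re →
    IntegrableOn (fun y : ℝ => Complex.exp (-ξ * (y : ℂ)) * (k (y - 1) : ℂ)) (Ioi 0) ∧
    (∫ y in Ioi (0 : ℝ), Complex.exp (-ξ * (y : ℂ)) * (k (y - 1) : ℂ)) = ξ / psiFn φ ξ

/-- Iterated antiderivatives: `kIter k 0 = k₋₁⁺` and `kIter k (n+1) = I₊ (kIter k n)`,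
so that `kₙ⁺ = kIter k (n+1)` for `n ≥ -1`. -/
def kIter (k : ℝ → ℝ) : ℕ → ℝ → ℝ
  | 0 => k
  | m + 1 => fun x => ∫ y in Iic x, kIter k m y

namespace LevyAux

variable {k : ℝ → ℝ}

section Basic

variable (hk0 : ∀ x : ℝ, x < -1 → k x = 0)
    (hknn : ∀ x : ℝ, -1 ≤ x → 0 ≤ k x)
    (hkc : ContinuousOn k (Ioi (-1)))
    (hkli : LocallyIntegrableOn k (Ici (-1)) volume)

/-- measurable modification of `k`, zero on `Iic (-1)`. -/
def gg (k : ℝ → ℝ) : ℝ → ℝ := fun x => if -1 < x then k x else 0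

include hk0 in
theorem gg_eq (x : ℝ) (hx : x ≠ -1) : gg k x = k x := by
  unfold gg
  rcases lt_or_gt_of_ne hx with h | h
  · rw [if_neg (by linarith), hk0 x h]
  · rw [if_pos h]

include hk0 in
theorem gg_ae : gg k =ᵐ[volume] k := by
  have : {x : ℝ | ¬ gg k x = k x} ⊆ {(-1 : ℝ)} := by
    intro x hx
    by_contra hne
    exact hx (gg_eq hk0 x (by simpa using hne))
  exact (measure_mono_null this (measure_singleton _))

theorem gg_zero (x : ℝ) (hx : x ≤ -1) : gg k x = 0 := if_neg (not_lt.2 hx)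

include hknn in
theorem gg_nonneg (x : ℝ) : 0 ≤ gg k x := by
  unfold gg; split_ifs with h
  · exact hknn x h.le
  · exact le_refl 0

include hkc in
theorem gg_measurable : Measurable (gg k) := by
  apply measurable_of_continuousOn_compl_singleton (-1 : ℝ)
  intro x hx
  replace hx : x ≠ -1 := by simpa using hx
  rcases lt_or_gt_of_ne hx with h | h
  · have he : (fun _ : ℝ => (0 : ℝ)) =ᶠ[𝓝 x] gg k :=
      Filter.eventuallyEq_of_mem (Iio_mem_nhds h) fun y hy => (gg_zero y (le_of_lt hy)).symm
    exact (continuousAt_const.congr he).continuousWithinAt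
  · have he : k =ᶠ[𝓝 x] gg k :=
      Filter.eventuallyEq_of_mem (Ioi_mem_nhds h) fun y hy => by
        simp only [gg, if_pos (show (-1:ℝ) < y from hy)]
    exact (((hkc x h).continuousAt (Ioi_mem_nhds h)).congr he).continuousWithinAt

include hk0 hkli in
theorem gg_integrableOn_Icc (c : ℝ) : IntegrableOn (gg k) (Icc (-1 : ℝ) c) := by
  rcases le_or_gt (-1 : ℝ) c with h | h
  · have hkint : IntegrableOn k (Icc (-1 : ℝ) c) :=
      hkli.integrableOn_compact_subset Icc_subset_Ici_self isCompact_Icc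
    exact hkint.congr ((gg_ae hk0).symm.restrict (s := Icc (-1 : ℝ) c))
  · rw [Icc_eq_empty (by linarith)]
    simp

include hk0 hkli in
theorem gg_integrableOn_Iic (c : ℝ) : IntegrableOn (gg k) (Iic c) := by
  have h1 : IntegrableOn (gg k) (Iic (-1 : ℝ)) := by
    apply (integrableOn_zero (s := Iic (-1:ℝ))).congr_fun (fun x hx => (gg_zero x hx).symm)
      measurableSet_Iic
  have h2 := gg_integrableOn_Icc hk0 hkli c
  have : Iic c ⊆ Iic (-1) ∪ Icc (-1) c := by
    intro x hx
    rcases le_or_gt x (-1) with h | h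
    · exact Or.inl h
    · exact Or.inr ⟨h.le, hx⟩
  exact (h1.union h2).mono_set this

include hk0 hkli in
theorem gg_intervalIntegrable (a b : ℝ) : IntervalIntegrable (gg k) volume a b :=
  ((gg_integrableOn_Iic hk0 hkli (max a b)).mono_set
    (fun x hx => hx.2 : uIcc a b ⊆ Iic (max a b))
    ).intervalIntegrable

end Basic

section K1sec

variable (k : ℝ → ℝ)

/-- `K1 = kIter k 1` with `g` instead of `k`. -/
def K1 : ℝ → ℝ := fun z => ∫ s in Iic z, gg k s

/-- the master constant. -/
def BB : ℝ := ∫ s in Icc (-1:ℝ) 1, gg k s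

variable {k}
variable (hk0 : ∀ x : ℝ, x < -1 → k x = 0)
    (hknn : ∀ x : ℝ, -1 ≤ x → 0 ≤ k x)
    (hkc : ContinuousOn k (Ioi (-1)))
    (hkli : LocallyIntegrableOn k (Ici (-1)) volume)

include hknn in
theorem BB_nonneg : 0 ≤ BB k :=
  setIntegral_nonneg measurableSet_Icc fun x _ => gg_nonneg hknn x

include hk0 hkli in
theorem K1_interval (z : ℝ) : K1 k z = ∫ s in (-1:ℝ)..z, gg k s := by
  rcases le_or_gt (-1:ℝ) z with h | h
  · rw [intervalIntegral.integral_of_le h]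
    unfold K1
    rw [← Iic_union_Ioc_eq_Iic h,
      setIntegral_union (Iic_disjoint_Ioc le_rfl) measurableSet_Ioc
        (((integrableOn_zero (s := Iic (-1:ℝ))).congr_fun
          (fun x hx => (gg_zero x hx).symm) measurableSet_Iic))
        ((gg_integrableOn_Icc hk0 hkli z).mono_set Ioc_subset_Icc_self)]
    have hz1 : (∫ x in Iic (-1:ℝ), gg k x) = 0 :=
      setIntegral_eq_zero_of_forall_eq_zero fun x hx => gg_zero x hx
    rw [hz1, zero_add]
  · have hz1 : (∫ x in Ioc z (-1:ℝ), gg k x) = 0 :=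
      setIntegral_eq_zero_of_forall_eq_zero fun x hx => gg_zero x hx.2
    have hz2 : (∫ x in Iic z, gg k x) = 0 :=
      setIntegral_eq_zero_of_forall_eq_zero fun x hx => gg_zero x (hx.trans h.le)
    rw [intervalIntegral.integral_of_ge h.le, hz1, neg_zero]
    exact hz2

include hk0 hkli in
theorem K1_continuous : Continuous (K1 k) := by
  have : Continuous fun z => ∫ s in (-1:ℝ)..z, gg k s :=
    intervalIntegral.continuous_primitive (fun a b => gg_intervalIntegrable hk0 hkli a b) (-1)
  exact this.congr fun z => (K1_interval hk0 hkli z).symm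

include hknn in
theorem K1_nonneg (z : ℝ) : 0 ≤ K1 k z :=
  setIntegral_nonneg measurableSet_Iic fun x _ => gg_nonneg hknn x

include hk0 hknn hkli in
theorem setIntegral_gg_le {a b : ℝ} (hb : b ≤ 1) : (∫ s in Ioc a b, gg k s) ≤ BB k := by
  have h1 : IntegrableOn (gg k) (Ioc a b ∩ Ioc (-1:ℝ) 1) :=
    (gg_integrableOn_Icc hk0 hkli 1).mono_set
      (fun x hx => Ioc_subset_Icc_self hx.2)
  have h2 : IntegrableOn (gg k) (Ioc a b \ Ioc (-1:ℝ) 1) :=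
    (integrableOn_zero (s := Ioc a b \ Ioc (-1:ℝ) 1)).congr_fun
      (fun x hx => by
        have hxle : x ≤ -1 := by
          by_contra hlt
          exact hx.2 ⟨lt_of_not_ge hlt, hx.1.2.trans hb⟩
        exact (gg_zero x hxle).symm)
      (measurableSet_Ioc.diff measurableSet_Ioc)
  have hsplit : (∫ s in Ioc a b, gg k s)
      = (∫ s in Ioc a b ∩ Ioc (-1:ℝ) 1, gg k s) + ∫ s in Ioc a b \ Ioc (-1:ℝ) 1, gg k s := by
    have hdisj : Disjoint (Ioc a b ∩ Ioc (-1:ℝ) 1) (Ioc a b \ Ioc (-1:ℝ) 1) :=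
      Disjoint.mono_left inter_subset_right disjoint_sdiff_self_right
    rw [← setIntegral_union hdisj
      (measurableSet_Ioc.diff measurableSet_Ioc) h1 h2, inter_union_diff]
  have hz : (∫ s in Ioc a b \ Ioc (-1:ℝ) 1, gg k s) = 0 :=
    setIntegral_eq_zero_of_forall_eq_zero (fun x hx => by
      have hxle : x ≤ -1 := by
        by_contra hlt
        exact hx.2 ⟨lt_of_not_ge hlt, hx.1.2.trans hb⟩
      exact gg_zero x hxle)
  rw [hsplit, hz, add_zero]
  refine setIntegral_mono_set (gg_integrableOn_Icc hk0 hkli 1)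
    (Filter.Eventually.of_forall fun x => gg_nonneg hknn x)
    (HasSubset.Subset.eventuallyLE ?_)
  exact fun x hx => Ioc_subset_Icc_self hx.2

include hk0 hknn hkli in
theorem K1_le (z : ℝ) (hz : z ≤ 1) : K1 k z ≤ BB k := by
  rcases le_or_gt (-1:ℝ) z with h | h
  · rw [K1_interval hk0 hkli z, intervalIntegral.integral_of_le h]
    exact setIntegral_gg_le hk0 hknn hkli hz
  · unfold K1
    rw [setIntegral_eq_zero_of_forall_eq_zero fun x hx => gg_zero x (hx.trans h.le)]
    exact BB_nonneg hknn

include hk0 hkli in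
/-- translation identity. -/
theorem trans_K1 (x y : ℝ) (hx : -1 ≤ x) (hy : -1 ≤ y) :
    (∫ t in Ioc (-1:ℝ) x, gg k (t - y - 1)) = K1 k (x - y - 1) := by
  have e0 : ∀ t : ℝ, t - y - 1 = t - (y + 1) := fun t => by ring
  rw [← intervalIntegral.integral_of_le hx]
  have e1 : (∫ t in (-1:ℝ)..x, gg k (t - y - 1)) = ∫ t in (-1:ℝ)..x, gg k (t - (y+1)) := by
    simp_rw [e0]
  rw [e1, intervalIntegral.integral_comp_sub_right (gg k) (y+1), K1_interval hk0 hkli]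
  have e2 : (-1:ℝ) - (y+1) = -2 - y := by ring
  have e3 : x - (y+1) = x - y - 1 := by ring
  rw [e2, e3]
  have hadj := intervalIntegral.integral_add_adjacent_intervals
    (gg_intervalIntegrable hk0 hkli (-2-y) (-1)) (gg_intervalIntegrable hk0 hkli (-1) (x-y-1))
  have hz : (∫ s in (-2-y : ℝ)..(-1:ℝ), gg k s) = 0 := by
    rw [intervalIntegral.integral_of_le (by linarith)]
    exact setIntegral_eq_zero_of_forall_eq_zero fun s hs => gg_zero s hs.2
  rw [← hadj, hz, zero_add]

end K1sec

section Core

variable (k w : ℝ → ℝ)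

/-- the product integrand. -/
def Fp : ℝ × ℝ → ℝ := fun p => gg k (p.1 - p.2 - 1) * w p.2

/-- the full-range derivative function. -/
def Gt : ℝ → ℝ := fun t => ∫ y in Ioc (-1:ℝ) 1, gg k (t - y - 1) * w y

variable {k w}
variable (hk0 : ∀ x : ℝ, x < -1 → k x = 0)
    (hknn : ∀ x : ℝ, -1 ≤ x → 0 ≤ k x)
    (hkc : ContinuousOn k (Ioi (-1)))
    (hkli : LocallyIntegrableOn k (Ici (-1)) volume)
    (hw : IntegrableOn w (Ioc (-1:ℝ) 1))

include hkc in
theorem Fp_aesm (μ ν : Measure ℝ) [SFinite ν] (hwm : AEStronglyMeasurable w ν) :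
    AEStronglyMeasurable (Fp k w) (μ.prod ν) := by
  have hm1 : Measurable fun p : ℝ × ℝ => gg k (p.1 - p.2 - 1) :=
    (gg_measurable hkc).comp ((measurable_fst.sub measurable_snd).sub measurable_const)
  exact hm1.aestronglyMeasurable.mul hwm.comp_snd

include hk0 hkli in
theorem gg_shift_int (y : ℝ) : IntegrableOn (fun t => gg k (t - y - 1)) (Ioc (-1:ℝ) 1) := by
  have h0 := (gg_intervalIntegrable hk0 hkli (-2 - y) (-y)).comp_sub_right (y + 1)
  have e1 : (-2 - y) + (y + 1) = (-1 : ℝ) := by ring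
  have e2 : (-y) + (y + 1) = (1 : ℝ) := by ring
  rw [e1, e2] at h0
  have h1 := (intervalIntegrable_iff_integrableOn_Ioc_of_le (by norm_num : (-1:ℝ) ≤ 1)).mp h0
  have he : (fun t : ℝ => gg k (t - (y + 1))) = fun t : ℝ => gg k (t - y - 1) := by
    funext t; rw [show t - (y + 1) = t - y - 1 from by ring]
  rwa [he] at h1

include hk0 hknn hkc hkli hw in
theorem Fp_prod_integrable :
    Integrable (Fp k w)
      ((volume.restrict (Ioc (-1:ℝ) 1)).prod (volume.restrict (Ioc (-1:ℝ) 1))) := by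
  rw [integrable_prod_iff' (Fp_aesm hkc _ _ hw.aestronglyMeasurable)]
  constructor
  · filter_upwards [ae_restrict_mem measurableSet_Ioc] with y _
    exact (gg_shift_int hk0 hkli y).mul_const (w y)
  · apply Integrable.mono' ((hw.abs.const_mul (BB k)) :
      Integrable (fun y => BB k * |w y|) (volume.restrict (Ioc (-1:ℝ) 1)))
    · exact ((Fp_aesm hkc _ _ hw.aestronglyMeasurable).norm.prod_swap).integral_prod_right'
    · filter_upwards [ae_restrict_mem measurableSet_Ioc] with y hy
      show ‖∫ t in Ioc (-1:ℝ) 1, ‖gg k (t - y - 1) * w y‖‖ ≤ BB k * |w y|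
      have h1 : (∫ t in Ioc (-1:ℝ) 1, ‖gg k (t - y - 1) * w y‖)
          = (∫ t in Ioc (-1:ℝ) 1, gg k (t - y - 1)) * |w y| := by
        rw [← integral_mul_const]
        refine setIntegral_congr_fun measurableSet_Ioc fun t _ => ?_
        rw [Real.norm_eq_abs, abs_mul, abs_of_nonneg (gg_nonneg hknn _)]
      have h2 : (∫ t in Ioc (-1:ℝ) 1, gg k (t - y - 1)) ≤ BB k := by
        rw [trans_K1 hk0 hkli 1 y (by norm_num) hy.1.le]
        exact K1_le hk0 hknn hkli _ (by linarith [hy.1])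
      rw [Real.norm_eq_abs, abs_of_nonneg (integral_nonneg fun t => norm_nonneg _), h1,
        mul_comm (BB k) |w y|, mul_comm _ |w y|]
      exact mul_le_mul_of_nonneg_left h2 (abs_nonneg _)

include hk0 hknn hkc hkli hw in
theorem Gt_integrableOn : IntegrableOn (Gt k w) (Ioc (-1:ℝ) 1) :=
  (Fp_prod_integrable hk0 hknn hkc hkli hw).integral_prod_left

include hk0 hknn hkc hkli hw in
theorem master_identity {x : ℝ} (hx1 : (-1:ℝ) ≤ x) (hx2 : x ≤ 1) :
    (∫ y in (-1:ℝ)..x, K1 k (x - y - 1) * w y) = ∫ t in Ioc (-1:ℝ) x, Gt k w t := by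
  have hint1 : IntegrableOn (fun y => K1 k (x - y - 1) * w y) (Ioc (-1:ℝ) x) := by
    apply Integrable.mono' (((hw.mono_set (Ioc_subset_Ioc_right hx2)).abs.const_mul (BB k)) :
      Integrable (fun y => BB k * |w y|) (volume.restrict (Ioc (-1:ℝ) x)))
    · have hc : Continuous fun y : ℝ => K1 k (x - y - 1) :=
        (K1_continuous hk0 hkli).comp (by fun_prop)
      exact hc.aestronglyMeasurable.mul (hw.mono_set (Ioc_subset_Ioc_right hx2)).aestronglyMeasurable
    · filter_upwards [ae_restrict_mem measurableSet_Ioc] with y hy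
      rw [Real.norm_eq_abs, abs_mul, abs_of_nonneg (K1_nonneg hknn _)]
      exact mul_le_mul_of_nonneg_right
        (K1_le hk0 hknn hkli _ (by linarith [hy.1])) (abs_nonneg _)
  have hzero : ∀ y ∈ Ioc x (1:ℝ), K1 k (x - y - 1) * w y = 0 := fun y hy => by
    have h0 : K1 k (x - y - 1) = 0 :=
      setIntegral_eq_zero_of_forall_eq_zero fun s hs =>
        gg_zero s (le_trans hs (by linarith [hy.1]))
    rw [h0, zero_mul]
  have hint2 : IntegrableOn (fun y => K1 k (x - y - 1) * w y) (Ioc x 1) :=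
    (integrableOn_zero (s := Ioc x 1)).congr_fun
      (fun y hy => (hzero y hy).symm) measurableSet_Ioc
  have step2 : (∫ y in Ioc (-1:ℝ) x, K1 k (x - y - 1) * w y)
      = ∫ y in Ioc (-1:ℝ) 1, K1 k (x - y - 1) * w y := by
    rw [← Ioc_union_Ioc_eq_Ioc hx1 hx2,
      setIntegral_union (Set.Ioc_disjoint_Ioc_of_le le_rfl) measurableSet_Ioc hint1 hint2,
      setIntegral_eq_zero_of_forall_eq_zero hzero, add_zero]
  rw [intervalIntegral.integral_of_le hx1, step2]
  have step3 : (∫ y in Ioc (-1:ℝ) 1, K1 k (x - y - 1) * w y)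
      = ∫ y in Ioc (-1:ℝ) 1, ∫ t in Ioc (-1:ℝ) x, gg k (t - y - 1) * w y := by
    refine setIntegral_congr_fun measurableSet_Ioc fun y hy => ?_
    rw [← trans_K1 hk0 hkli x y hx1 hy.1.le, integral_mul_const]
  rw [step3]
  -- swap order of integration
  have hPx : Integrable (Fp k w)
      ((volume.restrict (Ioc (-1:ℝ) x)).prod (volume.restrict (Ioc (-1:ℝ) 1))) := by
    refine (Fp_prod_integrable hk0 hknn hkc hkli hw).mono_measure ?_
    rw [Measure.prod_restrict, Measure.prod_restrict]
    exact Measure.restrict_mono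
      (Set.prod_mono (Ioc_subset_Ioc_right hx2) subset_rfl) le_rfl
  exact (integral_integral_swap (f := fun t y => gg k (t - y - 1) * w y) hPx).symm

include hk0 hw in
theorem Gt_eq (t : ℝ) (ht1 : (-1:ℝ) ≤ t) (ht2 : t ≤ 1)
    (hyt : IntegrableOn (fun y => gg k (t - y - 1) * w y) (Ioc (-1:ℝ) 1)) :
    (∫ y in (-1:ℝ)..t, k (t - y - 1) * w y) = Gt k w t := by
  have h1 : ∀ᵐ y : ℝ ∂volume, y ≠ t := by
    rw [ae_iff]
    simpa using measure_singleton t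
  have hae : ∀ᵐ y ∂volume, y ∈ Ioc (-1:ℝ) t → k (t - y - 1) * w y = gg k (t - y - 1) * w y := by
    filter_upwards [h1] with y hy _
    rw [gg_eq hk0 _ (fun hc => hy (by linarith [hc] : y = t))]
  rw [intervalIntegral.integral_of_le ht1,
    setIntegral_congr_ae measurableSet_Ioc hae]
  have hzero : ∀ y ∈ Ioc t (1:ℝ), gg k (t - y - 1) * w y = 0 := fun y hy => by
    rw [gg_zero _ (by linarith [hy.1]), zero_mul]
  have hint2 : IntegrableOn (fun y => gg k (t - y - 1) * w y) (Ioc t 1) :=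
    (integrableOn_zero (s := Ioc t 1)).congr_fun
      (fun y hy => (hzero y hy).symm) measurableSet_Ioc
  have hint1 : IntegrableOn (fun y => gg k (t - y - 1) * w y) (Ioc (-1:ℝ) t) :=
    hyt.mono_set (Ioc_subset_Ioc_right ht2)
  show _ = ∫ y in Ioc (-1:ℝ) 1, gg k (t - y - 1) * w y
  rw [← Ioc_union_Ioc_eq_Ioc ht1 ht2,
    setIntegral_union (Set.Ioc_disjoint_Ioc_of_le le_rfl) measurableSet_Ioc hint1 hint2,
    setIntegral_eq_zero_of_forall_eq_zero hzero, add_zero]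

include hk0 hknn hkc hkli hw in
theorem Gt_ae :
    (fun t => ∫ y in (-1:ℝ)..t, k (t - y - 1) * w y)
      =ᵐ[volume.restrict (Ioc (-1:ℝ) 1)] Gt k w := by
  filter_upwards [ae_restrict_mem measurableSet_Ioc,
    (Fp_prod_integrable hk0 hknn hkc hkli hw).prod_right_ae] with t ht hslice
  exact Gt_eq hk0 hw t ht.1.le ht.2 hslice

include hk0 hknn hkc hkli hw in
theorem norm_slice_le (y : ℝ) (hy : y ∈ Ioc (-1:ℝ) 1) :
    (∫ t in Ioc (-1:ℝ) 1, ‖gg k (t - y - 1) * w y‖) ≤ BB k * |w y| := by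
  have h1 : (∫ t in Ioc (-1:ℝ) 1, ‖gg k (t - y - 1) * w y‖)
      = (∫ t in Ioc (-1:ℝ) 1, gg k (t - y - 1)) * |w y| := by
    rw [← integral_mul_const]
    refine setIntegral_congr_fun measurableSet_Ioc fun t _ => ?_
    rw [Real.norm_eq_abs, abs_mul, abs_of_nonneg (gg_nonneg hknn _)]
  have h2 : (∫ t in Ioc (-1:ℝ) 1, gg k (t - y - 1)) ≤ BB k := by
    rw [trans_K1 hk0 hkli 1 y (by norm_num) hy.1.le]
    exact K1_le hk0 hknn hkli _ (by linarith [hy.1])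
  rw [h1, mul_comm (BB k) |w y|, mul_comm _ |w y|]
  exact mul_le_mul_of_nonneg_left h2 (abs_nonneg _)

include hk0 hknn hkc hkli in
theorem part1 (hw : IntegrableOn w (Icc (-1:ℝ) 1)) :
    IntegrableOn (fun x : ℝ => ∫ y in (-1 : ℝ)..x, K1 k (x - y - 1) * w y) (Icc (-1:ℝ) 1) ∧
    IntegrableOn (fun x : ℝ => ∫ y in (-1 : ℝ)..x, k (x - y - 1) * w y) (Icc (-1:ℝ) 1) ∧
    (∀ x ∈ Icc (-1 : ℝ) 1,
      (∫ y in (-1 : ℝ)..x, K1 k (x - y - 1) * w y) =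
        ∫ t in (-1 : ℝ)..x, ∫ y in (-1 : ℝ)..t, k (t - y - 1) * w y) ∧
    (∫ x in Icc (-1 : ℝ) 1, |∫ y in (-1 : ℝ)..x, K1 k (x - y - 1) * w y|) +
        (∫ x in Icc (-1 : ℝ) 1, |∫ y in (-1 : ℝ)..x, k (x - y - 1) * w y|) ≤
      (3 * BB k + 1) * ∫ x in Icc (-1 : ℝ) 1, |w x| := by
  have hw1 : IntegrableOn w (Ioc (-1:ℝ) 1) := hw.mono_set Ioc_subset_Icc_self
  have hP := Fp_prod_integrable hk0 hknn hkc hkli hw1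
  have hGti := Gt_integrableOn hk0 hknn hkc hkli hw1
  have hGae := Gt_ae hk0 hknn hkc hkli hw1
  have hFeq : ∀ x ∈ Icc (-1:ℝ) 1,
      (∫ y in (-1:ℝ)..x, K1 k (x - y - 1) * w y) = ∫ t in Ioc (-1:ℝ) x, Gt k w t :=
    fun x hx => master_identity hk0 hknn hkc hkli hw1 hx.1 hx.2
  have hFcont : ContinuousOn (fun x => ∫ y in (-1:ℝ)..x, K1 k (x - y - 1) * w y)
      (Icc (-1:ℝ) 1) := by
    have hprim : ContinuousOn (fun x => ∫ t in Ioc (-1:ℝ) x, Gt k w t) (Icc (-1:ℝ) 1) :=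
      intervalIntegral.continuousOn_primitive ((integrableOn_Icc_iff_integrableOn_Ioc (ha := enorm_ne_top)).mpr hGti)
    exact hprim.congr hFeq
  have hFint : IntegrableOn (fun x => ∫ y in (-1:ℝ)..x, K1 k (x - y - 1) * w y)
      (Icc (-1:ℝ) 1) := hFcont.integrableOn_Icc
  have hGstmt : IntegrableOn (fun x => ∫ y in (-1:ℝ)..x, k (x - y - 1) * w y)
      (Icc (-1:ℝ) 1) :=
    (integrableOn_Icc_iff_integrableOn_Ioc (ha := enorm_ne_top)).mpr (hGti.congr hGae.symm)
  refine ⟨hFint, hGstmt, ?_, ?_⟩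
  · intro x hx
    rw [hFeq x hx, intervalIntegral.integral_of_le hx.1]
    exact integral_congr_ae
      (hGae.symm.filter_mono (ae_mono (Measure.restrict_mono (Ioc_subset_Ioc_right hx.2) le_rfl)))
  · -- the norm bound
    set D : ℝ := ∫ t in Ioc (-1:ℝ) 1, |Gt k w t| with hD
    have hDnn : 0 ≤ D := setIntegral_nonneg measurableSet_Ioc fun t _ => abs_nonneg _
    have hIccIoc : (∫ x in Icc (-1:ℝ) 1, |w x|) = ∫ x in Ioc (-1:ℝ) 1, |w x| := by
      rw [Measure.restrict_congr_set Ioc_ae_eq_Icc]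
    have hwabsnn : 0 ≤ ∫ x in Icc (-1:ℝ) 1, |w x| :=
      setIntegral_nonneg measurableSet_Icc fun t _ => abs_nonneg _
    -- D ≤ BB * ∫|w|
    have habs : D ≤ BB k * ∫ y in Ioc (-1:ℝ) 1, |w y| := by
      have h1 : ∀ t : ℝ, |Gt k w t| ≤ ∫ y in Ioc (-1:ℝ) 1, ‖Fp k w (t, y)‖ := fun t => by
        rw [← Real.norm_eq_abs]
        exact norm_integral_le_integral_norm _
      have h2 : D ≤ ∫ t in Ioc (-1:ℝ) 1, ∫ y in Ioc (-1:ℝ) 1, ‖Fp k w (t, y)‖ :=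
        integral_mono hGti.abs hP.integral_norm_prod_left h1
      have h3 : (∫ t in Ioc (-1:ℝ) 1, ∫ y in Ioc (-1:ℝ) 1, ‖Fp k w (t, y)‖)
          = ∫ y in Ioc (-1:ℝ) 1, ∫ t in Ioc (-1:ℝ) 1, ‖Fp k w (t, y)‖ :=
        integral_integral_swap (f := fun t y => ‖Fp k w (t, y)‖) hP.norm
      have h4 : (∫ y in Ioc (-1:ℝ) 1, ∫ t in Ioc (-1:ℝ) 1, ‖Fp k w (t, y)‖)
          ≤ ∫ y in Ioc (-1:ℝ) 1, BB k * |w y| := by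
        refine integral_mono_of_nonneg
          (Filter.Eventually.of_forall fun y => integral_nonneg fun t => norm_nonneg _)
          (hw1.abs.const_mul (BB k)) ?_
        filter_upwards [ae_restrict_mem measurableSet_Ioc] with y hy
        exact norm_slice_le hk0 hknn hkc hkli hw1 y hy
      calc D ≤ _ := h2
        _ = _ := h3
        _ ≤ _ := h4
        _ = BB k * ∫ y in Ioc (-1:ℝ) 1, |w y| := integral_const_mul _ _
    -- pointwise bound for F
    have hFb : ∀ x ∈ Icc (-1:ℝ) 1, |∫ y in (-1:ℝ)..x, K1 k (x - y - 1) * w y| ≤ D := by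
      intro x hx
      rw [hFeq x hx, ← Real.norm_eq_abs]
      refine le_trans (norm_integral_le_integral_norm _) ?_
      refine setIntegral_mono_set hGti.abs
        (Filter.Eventually.of_forall fun t => abs_nonneg _)
        (HasSubset.Subset.eventuallyLE (Ioc_subset_Ioc_right hx.2))
    have hvol : (volume (Icc (-1:ℝ) 1)).toReal = 2 := by
      rw [Real.volume_Icc]
      norm_num
    have hFsum : (∫ x in Icc (-1:ℝ) 1, |∫ y in (-1:ℝ)..x, K1 k (x - y - 1) * w y|) ≤ 2 * D := by
      have := setIntegral_mono_on hFint.abs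
        (integrableOn_const measure_Icc_lt_top.ne) measurableSet_Icc hFb
      rw [setIntegral_const, show volume.real (Icc (-1:ℝ) 1) = 2 from hvol, smul_eq_mul] at this
      exact this
    have hGsum : (∫ x in Icc (-1:ℝ) 1, |∫ y in (-1:ℝ)..x, k (x - y - 1) * w y|) = D := by
      rw [show (volume.restrict (Icc (-1:ℝ) 1)) = volume.restrict (Ioc (-1:ℝ) 1) from
        (Measure.restrict_congr_set Ioc_ae_eq_Icc).symm]
      exact integral_congr_ae (hGae.fun_comp abs)
    rw [← hIccIoc] at habs
    have hfin : (3 * BB k + 1) * (∫ x in Icc (-1:ℝ) 1, |w x|)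
        = 3 * (BB k * ∫ x in Icc (-1:ℝ) 1, |w x|) + ∫ x in Icc (-1:ℝ) 1, |w x| := by ring
    linarith [hFsum, hGsum.le, habs, hwabsnn]

include hk0 hknn hkc hkli in
theorem part2 (hwc : ContinuousOn w (Icc (-1:ℝ) 1)) :
    ContinuousOn (fun x : ℝ => ∫ y in (-1 : ℝ)..x, K1 k (x - y - 1) * w y) (Icc (-1:ℝ) 1) ∧
    ContinuousOn (fun x : ℝ => ∫ y in (-1 : ℝ)..x, k (x - y - 1) * w y) (Icc (-1:ℝ) 1) ∧
    (∀ x ∈ Icc (-1 : ℝ) 1,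
      HasDerivWithinAt (fun z : ℝ => ∫ y in (-1 : ℝ)..z, K1 k (z - y - 1) * w y)
        (∫ y in (-1 : ℝ)..x, k (x - y - 1) * w y) (Icc (-1:ℝ) 1) x) ∧
    ∀ x ∈ Icc (-1 : ℝ) 1,
      |∫ y in (-1 : ℝ)..x, K1 k (x - y - 1) * w y| +
          |∫ y in (-1 : ℝ)..x, k (x - y - 1) * w y| ≤
        (3 * BB k + 1) * sSup ((fun y : ℝ => |w y|) '' Icc (-1 : ℝ) 1) := by
  have hw : IntegrableOn w (Icc (-1:ℝ) 1) := hwc.integrableOn_Icc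
  have hw1 : IntegrableOn w (Ioc (-1:ℝ) 1) := hw.mono_set Ioc_subset_Icc_self
  have hGti := Gt_integrableOn hk0 hknn hkc hkli hw1
  have hGae := Gt_ae hk0 hknn hkc hkli hw1
  have hFeq : ∀ x ∈ Icc (-1:ℝ) 1,
      (∫ y in (-1:ℝ)..x, K1 k (x - y - 1) * w y) = ∫ t in Ioc (-1:ℝ) x, Gt k w t :=
    fun x hx => master_identity hk0 hknn hkc hkli hw1 hx.1 hx.2
  have hFcont : ContinuousOn (fun x => ∫ y in (-1:ℝ)..x, K1 k (x - y - 1) * w y)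
      (Icc (-1:ℝ) 1) := by
    have hprim : ContinuousOn (fun x => ∫ t in Ioc (-1:ℝ) x, Gt k w t) (Icc (-1:ℝ) 1) :=
      intervalIntegral.continuousOn_primitive ((integrableOn_Icc_iff_integrableOn_Ioc (ha := enorm_ne_top)).mpr hGti)
    exact hprim.congr hFeq
  -- the sup bound
  set S : ℝ := sSup ((fun y : ℝ => |w y|) '' Icc (-1 : ℝ) 1) with hS
  have hbdd : BddAbove ((fun y : ℝ => |w y|) '' Icc (-1 : ℝ) 1) :=
    (isCompact_Icc.image_of_continuousOn hwc.abs).bddAbove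
  have hleS : ∀ y ∈ Icc (-1:ℝ) 1, |w y| ≤ S :=
    fun y hy => le_csSup hbdd (mem_image_of_mem _ hy)
  have hS0 : 0 ≤ S := le_trans (abs_nonneg _) (hleS 0 (by norm_num))
  -- continuous extension of w
  set wex : ℝ → ℝ := fun y => w (Set.projIcc (-1:ℝ) 1 (by norm_num) y) with hwex
  have hwexc : Continuous wex := hwc.restrict.comp continuous_projIcc
  have hwexeq : ∀ y ∈ Icc (-1:ℝ) 1, wex y = w y := fun y hy => by
    have hp := Set.projIcc_of_mem (show (-1:ℝ) ≤ 1 by norm_num) hy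
    show w ↑(Set.projIcc (-1:ℝ) 1 (by norm_num) y) = w y
    rw [hp]
  have hwexS : ∀ y : ℝ, |wex y| ≤ S := fun y => hleS _ (Set.projIcc (-1:ℝ) 1 (by norm_num) y).2
  set c : ℝ := w (-1) with hc
  have hm1 : (-1 : ℝ) ∈ Icc (-1:ℝ) 1 := by norm_num
  have hcS : |c| ≤ S := hleS _ hm1
  -- shifted extension, vanishing left of -1
  set H : ℝ → ℝ := fun y => if y ≤ -1 then 0 else wex y - c with hH
  have hHcont : Continuous H := by
    refine continuous_if_le continuous_id continuous_const continuous_const.continuousOn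
      ((hwexc.sub continuous_const).continuousOn) fun y hy => ?_
    rw [hy, hwexeq _ hm1, ← hc, sub_self]
  have hHbd : ∀ y : ℝ, ‖H y‖ ≤ S + S := fun y => by
    rw [Real.norm_eq_abs]
    show |if y ≤ -1 then (0:ℝ) else wex y - c| ≤ S + S
    split_ifs with h
    · simpa using by linarith
    · exact le_trans (abs_sub _ _) (add_le_add (hwexS y) hcS)
  have hHzero : ∀ y : ℝ, y ≤ -1 → H y = 0 := fun y hy => if_pos hy
  have hHval : ∀ y : ℝ, -1 ≤ y → H y = wex y - c := fun y hy => by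
    rcases eq_or_lt_of_le hy with h | h
    · subst h
      rw [hHzero _ le_rfl, hwexeq _ hm1]
      exact (sub_self (w (-1))).symm
    · exact if_neg (not_le.mpr h)
  -- the convolution
  set gone : ℝ → ℝ := (Ioc (-1:ℝ) 1).indicator (gg k) with hgone
  have hgone_int : Integrable gone :=
    (integrable_indicator_iff measurableSet_Ioc).mpr
      ((gg_integrableOn_Icc hk0 hkli 1).mono_set Ioc_subset_Icc_self)
  set CONV : ℝ → ℝ := MeasureTheory.convolution gone H (ContinuousLinearMap.mul ℝ ℝ) volume
    with hCONV
  have hCONVc : Continuous CONV := by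
    refine BddAbove.continuous_convolution_right_of_integrable _ ?_ hgone_int hHcont
    refine ⟨S + S, ?_⟩
    rintro z ⟨y, rfl⟩
    exact hHbd y
  set G1 : ℝ → ℝ := fun t => CONV (t - 1) + c * K1 k t with hG1
  have hG1c : Continuous G1 :=
    ((hCONVc.comp (continuous_id.sub continuous_const)).add
      (continuous_const.mul (K1_continuous hk0 hkli)))
  -- integrand integrability helper
  have hHshift_int : ∀ t : ℝ, IntegrableOn (fun s => gg k s * H (t - 1 - s)) (Ioc (-1:ℝ) 1) := by
    intro t
    refine Integrable.mono'
      (((gg_integrableOn_Icc hk0 hkli 1).mono_set Ioc_subset_Icc_self).const_mul (S + S)) ?_ ?_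
    · exact ((gg_measurable hkc).aestronglyMeasurable.mul
        ((hHcont.comp (by fun_prop)).aestronglyMeasurable))
    · refine Filter.Eventually.of_forall fun s => ?_
      show ‖gg k s * H (t - 1 - s)‖ ≤ (S + S) * gg k s
      rw [Real.norm_eq_abs, abs_mul, abs_of_nonneg (gg_nonneg hknn s), mul_comm (S + S) _]
      exact mul_le_mul_of_nonneg_left (by rw [← Real.norm_eq_abs]; exact hHbd _)
        (gg_nonneg hknn s)
  -- representation of G1 on Icc
  have hG1repr : ∀ t ∈ Icc (-1:ℝ) 1, G1 t = ∫ s in Ioc (-1:ℝ) t, gg k s * wex (t - 1 - s) := by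
    intro t ht
    have h1 : CONV (t - 1) = ∫ s, gone s * H (t - 1 - s) := by
      rw [hCONV, convolution_def]
      simp only [ContinuousLinearMap.mul_apply']
    have h2 : (∫ s, gone s * H (t - 1 - s)) = ∫ s in Ioc (-1:ℝ) 1, gg k s * H (t - 1 - s) := by
      rw [← integral_indicator measurableSet_Ioc]
      congr 1
      funext s
      by_cases hs : s ∈ Ioc (-1:ℝ) 1
      · rw [hgone, Set.indicator_of_mem hs, Set.indicator_of_mem hs]
      · rw [hgone, Set.indicator_of_notMem hs, Set.indicator_of_notMem hs, zero_mul]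
    have hzero : ∀ s ∈ Ioc t (1:ℝ), gg k s * H (t - 1 - s) = 0 := fun s hs => by
      rw [hHzero _ (by linarith [hs.1]), mul_zero]
    have h3 : (∫ s in Ioc (-1:ℝ) 1, gg k s * H (t - 1 - s))
        = ∫ s in Ioc (-1:ℝ) t, gg k s * H (t - 1 - s) := by
      rw [← Ioc_union_Ioc_eq_Ioc ht.1 ht.2,
        setIntegral_union (Set.Ioc_disjoint_Ioc_of_le le_rfl) measurableSet_Ioc
          ((hHshift_int t).mono_set (Ioc_subset_Ioc_right ht.2))
          ((integrableOn_zero (s := Ioc t 1)).congr_fun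
            (fun s hs => (hzero s hs).symm) measurableSet_Ioc),
        setIntegral_eq_zero_of_forall_eq_zero hzero, add_zero]
    have h4 : (∫ s in Ioc (-1:ℝ) t, gg k s * H (t - 1 - s))
        = (∫ s in Ioc (-1:ℝ) t, gg k s * wex (t - 1 - s)) - (∫ s in Ioc (-1:ℝ) t, gg k s) * c := by
      have hint1 : IntegrableOn (fun s => gg k s * wex (t - 1 - s)) (Ioc (-1:ℝ) t) := by
        refine Integrable.mono'
          ((((gg_integrableOn_Icc hk0 hkli 1).mono_set Ioc_subset_Icc_self).mono_set
            (Ioc_subset_Ioc_right ht.2)).const_mul S) ?_ ?_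
        · exact ((gg_measurable hkc).aestronglyMeasurable.mul
            ((hwexc.comp (by fun_prop)).aestronglyMeasurable))
        · refine Filter.Eventually.of_forall fun s => ?_
          show ‖gg k s * wex (t - 1 - s)‖ ≤ S * gg k s
          rw [Real.norm_eq_abs, abs_mul, abs_of_nonneg (gg_nonneg hknn s), mul_comm S _]
          exact mul_le_mul_of_nonneg_left (hwexS _) (gg_nonneg hknn s)
      have hint2 : IntegrableOn (fun s => gg k s * c) (Ioc (-1:ℝ) t) :=
        (((gg_integrableOn_Icc hk0 hkli 1).mono_set Ioc_subset_Icc_self).mono_set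
            (Ioc_subset_Ioc_right ht.2)).mul_const c
      have hcongr : ∀ s ∈ Ioc (-1:ℝ) t, gg k s * H (t - 1 - s)
          = gg k s * wex (t - 1 - s) - gg k s * c := fun s hs => by
        rw [hHval _ (by linarith [hs.2])]
        ring
      rw [setIntegral_congr_fun measurableSet_Ioc hcongr, integral_sub hint1 hint2,
        integral_mul_const]
    have h5 : c * K1 k t = (∫ s in Ioc (-1:ℝ) t, gg k s) * c := by
      rw [K1_interval hk0 hkli, intervalIntegral.integral_of_le ht.1, mul_comm]
    show CONV (t - 1) + c * K1 k t = _
    rw [h1, h2, h3, h4, h5]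
    ring
  -- equality of the statement derivative with G1 on Icc
  have hGstmt_eq : ∀ t ∈ Icc (-1:ℝ) 1,
      (∫ y in (-1:ℝ)..t, k (t - y - 1) * w y) = G1 t := by
    intro t ht
    have h1 : ∀ᵐ y : ℝ ∂volume, y ≠ t := by
      rw [ae_iff]
      simpa using measure_singleton t
    have hcongr : ∀ᵐ y ∂volume, y ∈ Set.uIoc (-1:ℝ) t →
        k (t - y - 1) * w y = (fun s => gg k s * wex (t - 1 - s)) ((t - 1) - y) := by
      filter_upwards [h1] with y hy hmem
      rw [Set.uIoc_of_le ht.1] at hmem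
      show k (t - y - 1) * w y = gg k (t - 1 - y) * wex (t - 1 - (t - 1 - y))
      rw [show t - 1 - (t - 1 - y) = y from by ring,
        hwexeq y ⟨hmem.1.le, hmem.2.trans ht.2⟩,
        show t - 1 - y = t - y - 1 from by ring,
        gg_eq hk0 _ (fun hcc => hy (by linarith))]
    rw [intervalIntegral.integral_congr_ae hcongr,
      intervalIntegral.integral_comp_sub_left (fun s => gg k s * wex (t - 1 - s)) (t - 1),
      show t - 1 - t = (-1 : ℝ) from by ring, show t - 1 - (-1 : ℝ) = t from by ring,
      intervalIntegral.integral_of_le ht.1, ← hG1repr t ht]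
  have hGstmt_cont : ContinuousOn (fun x => ∫ y in (-1:ℝ)..x, k (x - y - 1) * w y)
      (Icc (-1:ℝ) 1) := hG1c.continuousOn.congr hGstmt_eq
  -- Gt agrees a.e. with G1
  have hG1ae : Gt k w =ᵐ[volume.restrict (Ioc (-1:ℝ) 1)] G1 := by
    refine hGae.symm.trans ?_
    filter_upwards [ae_restrict_mem measurableSet_Ioc] with t ht
    exact hGstmt_eq t (Ioc_subset_Icc_self ht)
  have hF2 : ∀ x ∈ Icc (-1:ℝ) 1,
      (∫ y in (-1:ℝ)..x, K1 k (x - y - 1) * w y) = ∫ t in (-1:ℝ)..x, G1 t := by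
    intro x hx
    rw [hFeq x hx, intervalIntegral.integral_of_le hx.1]
    exact integral_congr_ae
      (hG1ae.filter_mono (ae_mono (Measure.restrict_mono (Ioc_subset_Ioc_right hx.2) le_rfl)))
  have hderiv : ∀ x ∈ Icc (-1:ℝ) 1,
      HasDerivWithinAt (fun z : ℝ => ∫ y in (-1:ℝ)..z, K1 k (z - y - 1) * w y)
        (∫ y in (-1:ℝ)..x, k (x - y - 1) * w y) (Icc (-1:ℝ) 1) x := by
    intro x hx
    have hPder : HasDerivAt (fun z => ∫ t in (-1:ℝ)..z, G1 t) (G1 x) x :=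
      intervalIntegral.integral_hasDerivAt_right (hG1c.intervalIntegrable _ _)
        (hG1c.stronglyMeasurableAtFilter _ _) hG1c.continuousAt
    rw [hGstmt_eq x hx]
    exact (hPder.hasDerivWithinAt).congr (fun z hz => hF2 z hz) (hF2 x hx)
  -- the pointwise bounds
  have hG1bd : ∀ t ∈ Icc (-1:ℝ) 1, |G1 t| ≤ BB k * S := by
    intro t ht
    rw [hG1repr t ht, ← Real.norm_eq_abs]
    refine le_trans (norm_integral_le_integral_norm _) ?_
    have hb : (∫ s in Ioc (-1:ℝ) t, ‖gg k s * wex (t - 1 - s)‖)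
        ≤ ∫ s in Ioc (-1:ℝ) t, gg k s * S := by
      refine integral_mono_of_nonneg (Filter.Eventually.of_forall fun s => norm_nonneg _)
        ((((gg_integrableOn_Icc hk0 hkli 1).mono_set Ioc_subset_Icc_self).mono_set
          (Ioc_subset_Ioc_right ht.2)).mul_const S) ?_
      refine Filter.Eventually.of_forall fun s => ?_
      show ‖gg k s * wex (t - 1 - s)‖ ≤ gg k s * S
      rw [Real.norm_eq_abs, abs_mul, abs_of_nonneg (gg_nonneg hknn s)]
      exact mul_le_mul_of_nonneg_left (hwexS _) (gg_nonneg hknn s)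
    refine le_trans hb ?_
    rw [integral_mul_const]
    exact mul_le_mul_of_nonneg_right (setIntegral_gg_le hk0 hknn hkli ht.2) hS0
  have hbound : ∀ x ∈ Icc (-1:ℝ) 1,
      |∫ y in (-1:ℝ)..x, K1 k (x - y - 1) * w y| +
        |∫ y in (-1:ℝ)..x, k (x - y - 1) * w y| ≤ (3 * BB k + 1) * S := by
    intro x hx
    have hBBnn := BB_nonneg hknn
    have h1 : |∫ y in (-1:ℝ)..x, K1 k (x - y - 1) * w y| ≤ 2 * (BB k * S) := by
      rw [hF2 x hx, intervalIntegral.integral_of_le hx.1, ← Real.norm_eq_abs]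
      refine le_trans (norm_integral_le_integral_norm _) ?_
      have h2 : (∫ t in Ioc (-1:ℝ) x, ‖G1 t‖) ≤ ∫ t in Ioc (-1:ℝ) x, BB k * S := by
        refine setIntegral_mono_on (hG1c.norm.integrableOn_Ioc)
          (integrableOn_const measure_Ioc_lt_top.ne) measurableSet_Ioc ?_
        intro t ht
        rw [Real.norm_eq_abs]
        exact hG1bd t ⟨ht.1.le, ht.2.trans hx.2⟩
      refine le_trans h2 ?_
      rw [setIntegral_const, smul_eq_mul]
      have hv : (volume (Ioc (-1:ℝ) x)).toReal ≤ 2 := by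
        rw [Real.volume_Ioc, ENNReal.toReal_ofReal (by linarith [hx.1])]
        linarith [hx.2]
      exact mul_le_mul_of_nonneg_right hv (mul_nonneg hBBnn hS0)
    have h3 : |∫ y in (-1:ℝ)..x, k (x - y - 1) * w y| ≤ BB k * S := by
      rw [hGstmt_eq x hx]
      exact hG1bd x hx
    have hfin : (3 * BB k + 1) * S = 2 * (BB k * S) + (BB k * S) + S := by ring
    linarith [h1, h3, hS0]
  exact ⟨hFcont, hGstmt_cont, hderiv, hbound⟩

end Core

end LevyAux

/-- smoothing property of the Lévy integral operator `I^ψ_+`: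
it maps `L¹[-1,1]` boundedly into `W^{1,1}(-1,1)` with derivative
`(I^ψ_+ f)'(x) = ∫_{-1}^x k₋₁⁺(x-y-1) f(y) dy`, and `C[-1,1]` boundedly into `C¹[-1,1]`
with the same derivative formula. -/
theorem levy_integral_smoothing (φ : Measure ℝ) (hH0 : H0 φ) (k : ℝ → ℝ)
    (hk : IsScaleKernel φ k) :
    (∃ C : ℝ, 0 < C ∧ ∀ f : ℝ → ℝ, IntegrableOn f (Icc (-1) 1) →
      IntegrableOn (fun x : ℝ => ∫ y in (-1 : ℝ)..x, kIter k 1 (x - y - 1) * f y)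
        (Icc (-1) 1) ∧
      IntegrableOn (fun x : ℝ => ∫ y in (-1 : ℝ)..x, k (x - y - 1) * f y) (Icc (-1) 1) ∧
      (∀ x ∈ Icc (-1 : ℝ) 1,
        (∫ y in (-1 : ℝ)..x, kIter k 1 (x - y - 1) * f y) =
          ∫ t in (-1 : ℝ)..x, ∫ y in (-1 : ℝ)..t, k (t - y - 1) * f y) ∧
      (∫ x in Icc (-1 : ℝ) 1, |∫ y in (-1 : ℝ)..x, kIter k 1 (x - y - 1) * f y|) +
          (∫ x in Icc (-1 : ℝ) 1, |∫ y in (-1 : ℝ)..x, k (x - y - 1) * f y|) ≤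
        C * ∫ x in Icc (-1 : ℝ) 1, |f x|) ∧
    (∃ C : ℝ, 0 < C ∧ ∀ f : ℝ → ℝ, ContinuousOn f (Icc (-1) 1) →
      ContinuousOn (fun x : ℝ => ∫ y in (-1 : ℝ)..x, kIter k 1 (x - y - 1) * f y)
        (Icc (-1) 1) ∧
      ContinuousOn (fun x : ℝ => ∫ y in (-1 : ℝ)..x, k (x - y - 1) * f y) (Icc (-1) 1) ∧
      (∀ x ∈ Icc (-1 : ℝ) 1,
        HasDerivWithinAt (fun z : ℝ => ∫ y in (-1 : ℝ)..z, kIter k 1 (z - y - 1) * f y)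
          (∫ y in (-1 : ℝ)..x, k (x - y - 1) * f y) (Icc (-1) 1) x) ∧
      ∀ x ∈ Icc (-1 : ℝ) 1,
        |∫ y in (-1 : ℝ)..x, kIter k 1 (x - y - 1) * f y| +
            |∫ y in (-1 : ℝ)..x, k (x - y - 1) * f y| ≤
          C * sSup ((fun y : ℝ => |f y|) '' Icc (-1 : ℝ) 1)) := by
  obtain ⟨hk0, hknn, hkc, hkli, -, -⟩ := hk
  have hkiter : kIter k 1 = LevyAux.K1 k := by
    funext z
    show (∫ y in Iic z, k y) = ∫ s in Iic z, LevyAux.gg k s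
    exact integral_congr_ae ((LevyAux.gg_ae hk0).restrict).symm
  have hBB := LevyAux.BB_nonneg (k := k) hknn
  constructor
  · refine ⟨3 * LevyAux.BB k + 1, by linarith, fun f hf => ?_⟩
    have h := LevyAux.part1 hk0 hknn hkc hkli hf
    simp only [hkiter]
    exact h
  · refine ⟨3 * LevyAux.BB k + 1, by linarith, fun f hf => ?_⟩
    have h := LevyAux.part2 hk0 hknn hkc hkli hf
    simp only [hkiter]
    exact h
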